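/- There exists a universal constant C > 0 such that for any a < b and any vector field v = (v₁,v₂) ∈ C¹ on the closure of Ω_{a,b} having zero flux and satisfying v·n = 0 on ∂Ω_{a,b} ∩ ∂Ω, one has ‖v‖_{L²(Ω_{a,b})} ≤ C ‖f‖_{L^∞(a,b)} (1 + ‖f₂'‖_{L^∞(a,b)}) ‖∇v‖_{L²(Ω_{a,b})}. -/

import Mathlib

open MeasureTheory Set

/-- The channel piece `Ω_{a,b} = {x ∈ Ω : a < x₁ < b}` where
`Ω = {(x₁,x₂) : f₁(x₁) < x₂ < f₂(x₁)}`. -/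
def chan (f₁ f₂ : ℝ → ℝ) (a b : ℝ) : Set (ℝ × ℝ) :=
  {x : ℝ × ℝ | a < x.1 ∧ x.1 < b ∧ f₁ x.1 < x.2 ∧ x.2 < f₂ x.1}

/-- The pointwise squared gradient `|∇v|²` of the vector field `v = (v₁, v₂)`. -/
noncomputable def gsq (v₁ v₂ : ℝ × ℝ → ℝ) (x : ℝ × ℝ) : ℝ :=
  (fderiv ℝ v₁ x (1, 0)) ^ 2 + (fderiv ℝ v₁ x (0, 1)) ^ 2 +
    (fderiv ℝ v₂ x (1, 0)) ^ 2 + (fderiv ℝ v₂ x (0, 1)) ^ 2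


-- ## Auxiliary lemmas


lemma bound_fderiv {S : Set (ℝ×ℝ)} {v : ℝ×ℝ → ℝ} (hS : IsOpen S)
    (hK : IsCompact (closure S)) (hv : ContDiffOn ℝ 1 v (closure S)) :
    ∃ M : ℝ, ∀ x ∈ S, ‖fderiv ℝ v x‖ ≤ M := by
  have key : ∀ x ∈ closure S, ∃ r : ℝ, 0 < r ∧ ∃ M : ℝ,
      ∀ y ∈ S ∩ Metric.ball x r, ‖fderiv ℝ v y‖ ≤ M := by
    intro x hx
    have hcd : ContDiffWithinAt ℝ (1:ℕ) v (closure S) x := hv x hx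
    obtain ⟨u, hu, p, hp⟩ := contDiffWithinAt_nat.mp hcd
    rw [insert_eq_of_mem hx] at hu
    obtain ⟨O, hOopen, hxO, hOu⟩ := mem_nhdsWithin.mp hu
    obtain ⟨r, hrpos, hrO⟩ := (Metric.nhds_basis_closedBall.mem_iff).mp (hOopen.mem_nhds hxO)
    set D : ℝ×ℝ → (ℝ×ℝ) →L[ℝ] ℝ := fun y => continuousMultilinearCurryFin1 ℝ (ℝ×ℝ) ℝ (p y 1)
    have hDcont : ContinuousOn D u :=
      (continuousMultilinearCurryFin1 ℝ (ℝ×ℝ) ℝ).continuous.comp_continuousOn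
        (hp.cont 1 le_rfl)
    have hCcomp : IsCompact (closure S ∩ Metric.closedBall x r) :=
      hK.inter_right Metric.isClosed_closedBall
    have hsub : closure S ∩ Metric.closedBall x r ⊆ u := fun y hy =>
      hOu ⟨hrO hy.2, hy.1⟩
    obtain ⟨M, hM⟩ := hCcomp.exists_bound_of_continuousOn (hDcont.mono hsub)
    refine ⟨r, hrpos, M, fun y hy => ?_⟩
    have hyu : y ∈ u := hsub ⟨subset_closure hy.1, Metric.ball_subset_closedBall hy.2⟩
    have hfd : HasFDerivWithinAt v (D y) u y := hp.hasFDerivWithinAt (by norm_num) hyu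
    have hunhds : u ∈ nhds y := by
      have : S ∩ O ∈ nhds y := (hS.inter hOopen).mem_nhds ⟨hy.1, hrO (Metric.ball_subset_closedBall hy.2)⟩
      exact Filter.mem_of_superset this (fun z hz => hOu ⟨hz.2, subset_closure hz.1⟩)
    have : fderiv ℝ v y = D y := (hfd.hasFDerivAt hunhds).fderiv
    rw [this]
    exact hM y ⟨subset_closure hy.1, Metric.ball_subset_closedBall hy.2⟩
  choose! r hr M hM using key
  obtain ⟨t, htsub, htcov⟩ := hK.elim_nhds_subcover (fun x => Metric.ball x (r x))
    (fun x hx => Metric.ball_mem_nhds x (hr x hx))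
  obtain ⟨Mb, hMb⟩ := (t.image M).exists_le
  refine ⟨Mb, fun y hy => ?_⟩
  obtain ⟨x, hxt, hyx⟩ := mem_iUnion₂.mp (htcov (subset_closure hy))
  exact le_trans (hM x (htsub x hxt) y ⟨hy, hyx⟩) (hMb _ (Finset.mem_image_of_mem M hxt))


lemma cs_interval {ψ : ℝ → ℝ} {l u : ℝ} (hlu : l < u)
    (hψ : IntervalIntegrable ψ volume l u)
    (hψsq : IntervalIntegrable (fun y => ψ y ^ 2) volume l u) :
    (∫ y in l..u, ψ y) ^ 2 ≤ (u - l) * ∫ y in l..u, ψ y ^ 2 := by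
  set I := ∫ y in l..u, ψ y with hI
  set A := ∫ y in l..u, ψ y ^ 2 with hA
  have h0 : 0 < u - l := by linarith
  have key : 0 ≤ ∫ y in l..u, ((u - l) * ψ y - I) ^ 2 :=
    intervalIntegral.integral_nonneg hlu.le (fun y _ => sq_nonneg _)
  have expand : (∫ y in l..u, ((u - l) * ψ y - I) ^ 2)
      = (u - l) ^ 2 * A - (2 * (u - l) * I) * I + (u - l) * I ^ 2 := by
    have e : ∀ y, ((u - l) * ψ y - I) ^ 2
        = (u - l) ^ 2 * ψ y ^ 2 - (2 * (u - l) * I) * ψ y + I ^ 2 := fun y => by ring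
    rw [intervalIntegral.integral_congr (fun y _ => e y)]
    rw [intervalIntegral.integral_add ((hψsq.const_mul _).sub (hψ.const_mul _))
      intervalIntegrable_const,
      intervalIntegral.integral_sub (hψsq.const_mul _) (hψ.const_mul _),
      intervalIntegral.integral_const_mul, intervalIntegral.integral_const_mul,
      intervalIntegral.integral_const, smul_eq_mul]
  rw [expand] at key
  nlinarith [key, h0, mul_pos h0 h0]


lemma abs_subint {φ : ℝ → ℝ} {l u p q : ℝ} (hφ : IntervalIntegrable φ volume l u)
    (hp : p ∈ Icc l u) (hq : q ∈ Icc l u) :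
    |∫ t in p..q, φ t| ≤ ∫ t in l..u, |φ t| := by
  have habs : IntervalIntegrable (fun t => |φ t|) volume l u := hφ.abs
  have key : ∀ p q : ℝ, p ∈ Icc l u → q ∈ Icc l u → p ≤ q →
      |∫ t in p..q, φ t| ≤ ∫ t in l..u, |φ t| := by
    intro p q hp hq hpq
    calc |∫ t in p..q, φ t| ≤ ∫ t in p..q, |φ t| := by
          simpa [Real.norm_eq_abs] using
            intervalIntegral.norm_integral_le_integral_norm (f := φ) hpq
      _ ≤ ∫ t in l..u, |φ t| :=
          intervalIntegral.integral_mono_interval hp.1 hpq hq.2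
            (Filter.Eventually.of_forall (fun t => abs_nonneg _)) habs
  rcases le_total p q with h | h
  · exact key p q hp hq h
  · rw [intervalIntegral.integral_symm, abs_neg]
    exact key q p hq hp h

set_option maxHeartbeats 2000000 in
lemma slice_ineq {g₁ g₂ φ₁ φ₂ : ℝ → ℝ} {l u B₂ : ℝ} (hlu : l < u) (hB₂ : 0 ≤ B₂)
    (hg₁c : ContinuousOn g₁ (Icc l u)) (hg₂c : ContinuousOn g₂ (Icc l u))
    (hd₁ : ∀ y ∈ Ioo l u, HasDerivAt g₁ (φ₁ y) y)
    (hd₂ : ∀ y ∈ Ioo l u, HasDerivAt g₂ (φ₂ y) y)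
    (hφ₁ : IntervalIntegrable φ₁ volume l u)
    (hφ₂ : IntervalIntegrable φ₂ volume l u)
    (hφ₁sq : IntervalIntegrable (fun y => φ₁ y ^ 2) volume l u)
    (hφ₂sq : IntervalIntegrable (fun y => φ₂ y ^ 2) volume l u)
    (hflux : (∫ y in l..u, g₁ y) = 0)
    (hbc : |g₂ u| ≤ B₂ * |g₁ u|) :
    (∫ y in l..u, (g₁ y ^ 2 + g₂ y ^ 2)) ≤
      2 * (u - l) ^ 2 * (1 + B₂) ^ 2 * ∫ y in l..u, (φ₁ y ^ 2 + φ₂ y ^ 2) := by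
  have huicc : uIcc l u = Icc l u := uIcc_of_le hlu.le
  have hg₁int : IntervalIntegrable g₁ volume l u := by
    rw [intervalIntegrable_iff_integrableOn_Icc_of_le hlu.le]
    exact hg₁c.integrableOn_Icc
  -- find a zero of g₁
  set G : ℝ → ℝ := fun y => ∫ t in l..y, g₁ t with hG
  have hGc : ContinuousOn G (Icc l u) := by
    rw [← huicc]
    exact intervalIntegral.continuousOn_primitive_interval (huicc ▸ hg₁c.integrableOn_Icc)
  have hGd : ∀ y ∈ Ioo l u, HasDerivAt G (g₁ y) y := by
    intro y hy
    refine intervalIntegral.integral_hasDerivAt_right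
      (hg₁int.mono_set ?_) ?_ ((hd₁ y hy).continuousAt)
    · rw [huicc, uIcc_of_le hy.1.le]
      exact Icc_subset_Icc le_rfl hy.2.le
    · have hcon : ContinuousOn g₁ (Ioo l u) := fun z hz => (hd₁ z hz).continuousAt.continuousWithinAt
      exact hcon.stronglyMeasurableAtFilter isOpen_Ioo y hy
  obtain ⟨c, hc, hc0⟩ := exists_hasDerivAt_eq_slope G g₁ hlu hGc hGd
  have hgc : g₁ c = 0 := by
    simpa [hG, hflux, intervalIntegral.integral_same] using hc0
  set I₁ : ℝ := ∫ t in l..u, |φ₁ t| with hI₁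
  set I₂ : ℝ := ∫ t in l..u, |φ₂ t| with hI₂
  clear_value I₁ I₂
  have hI₁nn : 0 ≤ I₁ := hI₁ ▸ intervalIntegral.integral_nonneg hlu.le (fun t _ => abs_nonneg _)
  have hI₂nn : 0 ≤ I₂ := hI₂ ▸ intervalIntegral.integral_nonneg hlu.le (fun t _ => abs_nonneg _)
  -- FTC helper
  have ftc : ∀ (g φ : ℝ → ℝ), ContinuousOn g (Icc l u) →
      (∀ y ∈ Ioo l u, HasDerivAt g (φ y) y) → IntervalIntegrable φ volume l u →
      ∀ p ∈ Icc l u, ∀ q ∈ Icc l u, (∫ t in p..q, φ t) = g q - g p := by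
    intro g φ hgc' hd hφ p hp q hq
    refine intervalIntegral.integral_eq_sub_of_hasDeriv_right
      (hgc'.mono ?_) ?_ (hφ.mono_set ?_)
    · exact uIcc_subset_Icc hp hq
    · intro z hz
      have hz1 : l < z := lt_of_le_of_lt (le_min hp.1 hq.1) hz.1
      have hz2 : z < u := lt_of_lt_of_le hz.2 (max_le hp.2 hq.2)
      exact ((hd z ⟨hz1, hz2⟩).hasDerivWithinAt)
    · rw [huicc]
      exact uIcc_subset_Icc hp hq
  have hcmem : c ∈ Icc l u := ⟨hc.1.le, hc.2.le⟩
  have pt₁ : ∀ y ∈ Icc l u, |g₁ y| ≤ I₁ := by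
    intro y hy
    have := ftc g₁ φ₁ hg₁c hd₁ hφ₁ c hcmem y hy
    calc |g₁ y| = |∫ t in c..y, φ₁ t| := by rw [this, hgc, sub_zero]
      _ ≤ ∫ t in l..u, |φ₁ t| := abs_subint hφ₁ hcmem hy
      _ = I₁ := hI₁.symm
  have pt₂ : ∀ y ∈ Icc l u, |g₂ y| ≤ B₂ * I₁ + I₂ := by
    intro y hy
    have hu : u ∈ Icc l u := ⟨hlu.le, le_rfl⟩
    have := ftc g₂ φ₂ hg₂c hd₂ hφ₂ y hy u hu
    have h2 : |g₂ y| ≤ |g₂ u| + |∫ t in y..u, φ₂ t| := by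
      have : g₂ y = g₂ u - ∫ t in y..u, φ₂ t := by linarith [this]
      rw [this]
      exact (abs_sub _ _)
    calc |g₂ y| ≤ |g₂ u| + |∫ t in y..u, φ₂ t| := h2
      _ ≤ B₂ * |g₁ u| + I₂ := add_le_add hbc (hI₂ ▸ abs_subint hφ₂ hy hu)
      _ ≤ B₂ * I₁ + I₂ := by
          have := pt₁ u hu
          nlinarith [abs_nonneg (g₁ u)]
  -- pointwise square bound and integration
  set P : ℝ := I₁ ^ 2 + (B₂ * I₁ + I₂) ^ 2 with hP
  clear_value P
  have hgint : IntervalIntegrable (fun y => g₁ y ^ 2 + g₂ y ^ 2) volume l u := by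
    rw [intervalIntegrable_iff_integrableOn_Icc_of_le hlu.le]
    exact ((hg₁c.pow 2).add (hg₂c.pow 2)).integrableOn_Icc
  have step1 : (∫ y in l..u, (g₁ y ^ 2 + g₂ y ^ 2)) ≤ (u - l) * P := by
    have : (∫ y in l..u, (g₁ y ^ 2 + g₂ y ^ 2)) ≤ ∫ _y in l..u, P := by
      refine intervalIntegral.integral_mono_on hlu.le hgint intervalIntegrable_const ?_
      intro y hy
      have h1 : g₁ y ^ 2 ≤ I₁ ^ 2 := by
        rw [← sq_abs (g₁ y)]
        exact pow_le_pow_left₀ (abs_nonneg _) (pt₁ y hy) 2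
      have h2 : g₂ y ^ 2 ≤ (B₂ * I₁ + I₂) ^ 2 := by
        rw [← sq_abs (g₂ y)]
        exact pow_le_pow_left₀ (abs_nonneg _) (pt₂ y hy) 2
      simpa [hP] using add_le_add h1 h2
    have h2 : (∫ _y in l..u, P) = (u - l) * P := by
      rw [intervalIntegral.integral_const, smul_eq_mul]
    exact this.trans_eq h2
  -- Cauchy-Schwarz
  set A : ℝ := ∫ y in l..u, φ₁ y ^ 2 with hA
  set B : ℝ := ∫ y in l..u, φ₂ y ^ 2 with hB
  clear_value A B
  have hAnn : 0 ≤ A := hA ▸ intervalIntegral.integral_nonneg hlu.le (fun t _ => sq_nonneg _)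
  have hBnn : 0 ≤ B := hB ▸ intervalIntegral.integral_nonneg hlu.le (fun t _ => sq_nonneg _)
  have csA : I₁ ^ 2 ≤ (u - l) * A := by
    have h1 : IntervalIntegrable (fun y => |φ₁ y| ^ 2) volume l u := by
      have : (fun y => |φ₁ y| ^ 2) = fun y => φ₁ y ^ 2 := funext (fun y => sq_abs _)
      rw [this]; exact hφ₁sq
    have := cs_interval hlu hφ₁.abs h1
    simpa [sq_abs, ← hI₁, ← hA] using this
  have csB : I₂ ^ 2 ≤ (u - l) * B := by
    have h1 : IntervalIntegrable (fun y => |φ₂ y| ^ 2) volume l u := by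
      have : (fun y => |φ₂ y| ^ 2) = fun y => φ₂ y ^ 2 := funext (fun y => sq_abs _)
      rw [this]; exact hφ₂sq
    have := cs_interval hlu hφ₂.abs h1
    simpa [sq_abs, ← hI₂, ← hB] using this
  have hsum : (∫ y in l..u, (φ₁ y ^ 2 + φ₂ y ^ 2)) = A + B := by
    rw [hA, hB]; exact intervalIntegral.integral_add hφ₁sq hφ₂sq
  rw [hsum]
  have h0 : 0 < u - l := by linarith
  calc (∫ y in l..u, (g₁ y ^ 2 + g₂ y ^ 2)) ≤ (u - l) * P := step1
    _ ≤ 2 * (u - l) ^ 2 * (1 + B₂) ^ 2 * (A + B) := by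
        rw [hP]
        have e1 : (B₂ * I₁ + I₂) ^ 2 ≤ 2 * B₂ ^ 2 * I₁ ^ 2 + 2 * I₂ ^ 2 := by
          nlinarith [sq_nonneg (B₂ * I₁ - I₂)]
        have e5 : I₁ ^ 2 + (B₂ * I₁ + I₂) ^ 2
            ≤ (1 + 2 * B₂ ^ 2) * ((u - l) * A) + 2 * ((u - l) * B) := by nlinarith [csA, csB]
        have e6 : (u - l) * (I₁ ^ 2 + (B₂ * I₁ + I₂) ^ 2)
            ≤ (1 + 2 * B₂ ^ 2) * ((u - l) ^ 2 * A) + 2 * ((u - l) ^ 2 * B) := by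
          have h7 := mul_le_mul_of_nonneg_left e5 h0.le
          have h8 : (u - l) * ((1 + 2 * B₂ ^ 2) * ((u - l) * A) + 2 * ((u - l) * B))
              = (1 + 2 * B₂ ^ 2) * ((u - l) ^ 2 * A) + 2 * ((u - l) ^ 2 * B) := by ring
          linarith
        have f1 : 1 + 2 * B₂ ^ 2 ≤ 2 * (1 + B₂) ^ 2 := by nlinarith
        have f2 : (2 : ℝ) ≤ 2 * (1 + B₂) ^ 2 := by nlinarith
        have g1 : (1 + 2 * B₂ ^ 2) * ((u - l) ^ 2 * A) ≤ (2 * (1 + B₂) ^ 2) * ((u - l) ^ 2 * A) :=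
          mul_le_mul_of_nonneg_right f1 (by positivity)
        have g2 : 2 * ((u - l) ^ 2 * B) ≤ (2 * (1 + B₂) ^ 2) * ((u - l) ^ 2 * B) :=
          mul_le_mul_of_nonneg_right f2 (by positivity)
        have hring : (2 * (1 + B₂) ^ 2) * ((u - l) ^ 2 * A) + (2 * (1 + B₂) ^ 2) * ((u - l) ^ 2 * B)
            = 2 * (u - l) ^ 2 * (1 + B₂) ^ 2 * (A + B) := by ring
        linarith

lemma mem_chan {f₁ f₂ : ℝ → ℝ} {a b : ℝ} {x : ℝ × ℝ} :
    x ∈ chan f₁ f₂ a b ↔ a < x.1 ∧ x.1 < b ∧ f₁ x.1 < x.2 ∧ x.2 < f₂ x.1 := Iff.rfl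

lemma chan_isOpen {f₁ f₂ : ℝ → ℝ} (hf₁ : Continuous f₁) (hf₂ : Continuous f₂) (a b : ℝ) :
    IsOpen (chan f₁ f₂ a b) := by
  have : chan f₁ f₂ a b = ({x : ℝ × ℝ | a < x.1} ∩ {x | x.1 < b}) ∩
      ({x | f₁ x.1 < x.2} ∩ {x | x.2 < f₂ x.1}) := by
    ext x; simp [chan, and_assoc]
  rw [this]
  exact ((isOpen_lt continuous_const continuous_fst).inter
      (isOpen_lt continuous_fst continuous_const)).inter
    ((isOpen_lt (hf₁.comp continuous_fst) continuous_snd).inter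
      (isOpen_lt continuous_snd (hf₂.comp continuous_fst)))

lemma chan_isBounded {f₁ f₂ : ℝ → ℝ} (hf₁ : Continuous f₁) (hf₂ : Continuous f₂) (a b : ℝ) :
    Bornology.IsBounded (chan f₁ f₂ a b) := by
  obtain ⟨C₁, hC₁⟩ := isCompact_Icc.exists_bound_of_continuousOn (hf₁.continuousOn (s := Icc a b))
  obtain ⟨C₂, hC₂⟩ := isCompact_Icc.exists_bound_of_continuousOn (hf₂.continuousOn (s := Icc a b))
  have hsub : chan f₁ f₂ a b ⊆ Icc a b ×ˢ Icc (-C₁) C₂ := by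
    rintro ⟨x₁, x₂⟩ ⟨h1, h2, h3, h4⟩
    have hx : x₁ ∈ Icc a b := ⟨h1.le, h2.le⟩
    refine ⟨hx, ?_, ?_⟩
    · have := hC₁ x₁ hx
      have : -C₁ ≤ f₁ x₁ := by
        have := abs_le.mp (by simpa [Real.norm_eq_abs] using hC₁ x₁ hx)
        linarith [this.1]
      linarith
    · have : f₂ x₁ ≤ C₂ := by
        have := abs_le.mp (by simpa [Real.norm_eq_abs] using hC₂ x₁ hx)
        linarith [this.2]
      linarith
  exact (Bornology.IsBounded.prod (Metric.isBounded_Icc a b) (Metric.isBounded_Icc (-C₁) C₂)).subset hsub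

lemma mem_closure_chan {f₁ f₂ : ℝ → ℝ} {a b x₁ y : ℝ} (ha : a < x₁) (hb : x₁ < b)
    (hlu : f₁ x₁ < f₂ x₁) (hy : y ∈ Icc (f₁ x₁) (f₂ x₁)) :
    (x₁, y) ∈ closure (chan f₁ f₂ a b) := by
  set m := (f₁ x₁ + f₂ x₁) / 2 with hm
  have hm1 : f₁ x₁ < m := by rw [hm]; linarith
  have hm2 : m < f₂ x₁ := by rw [hm]; linarith
  have htend : Filter.Tendsto (fun t : ℝ => ((x₁ : ℝ), (1 - t) * y + t * m))
      (nhdsWithin 0 (Ioi 0)) (nhds (x₁, y)) := by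
    have hcont : Continuous fun t : ℝ => ((x₁ : ℝ), (1 - t) * y + t * m) := by
      fun_prop
    have h0 := hcont.tendsto 0
    simp only [sub_zero, one_mul, zero_mul, add_zero] at h0
    exact h0.mono_left nhdsWithin_le_nhds
  refine mem_closure_of_tendsto htend ?_
  filter_upwards [Ioo_mem_nhdsGT_of_mem (Set.left_mem_Ico.mpr one_pos)] with t ht
  refine ⟨ha, hb, ?_, ?_⟩
  · have := mul_nonneg (by linarith [ht.2] : (0:ℝ) ≤ 1 - t) (by linarith [hy.1] : (0:ℝ) ≤ y - f₁ x₁)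
    have h2 := mul_pos ht.1 (by linarith : (0:ℝ) < m - f₁ x₁)
    simp only
    nlinarith
  · have := mul_nonneg (by linarith [ht.2] : (0:ℝ) ≤ 1 - t) (by linarith [hy.2] : (0:ℝ) ≤ f₂ x₁ - y)
    have h2 := mul_pos ht.1 (by linarith : (0:ℝ) < f₂ x₁ - m)
    simp only
    nlinarith

lemma chan_measurableSet {f₁ f₂ : ℝ → ℝ} (hf₁ : Continuous f₁) (hf₂ : Continuous f₂) (a b : ℝ) :
    MeasurableSet (chan f₁ f₂ a b) := (chan_isOpen hf₁ hf₂ a b).measurableSet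

lemma integrableOn_bdd {α : Type*} [MeasurableSpace α] {μ : Measure α} {s : Set α}
    {φ : α → ℝ} {M : ℝ} (hs : MeasurableSet s) (hμ : μ s < ⊤)
    (hφ : AEStronglyMeasurable φ (μ.restrict s)) (hb : ∀ x ∈ s, |φ x| ≤ M) :
    IntegrableOn φ s μ := by
  refine Integrable.mono' (g := fun _ => M) ((integrableOn_const_iff (C := M)).mpr (Or.inr hμ)) hφ ?_
  exact (ae_restrict_iff' hs).mpr (Filter.Eventually.of_forall
    (fun x hx => by simpa [Real.norm_eq_abs] using hb x hx))

lemma lint_chan {f₁ f₂ : ℝ → ℝ} (hf₁ : Continuous f₁) (hf₂ : Continuous f₂) (a b : ℝ)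
    (F : ℝ × ℝ → ENNReal) (hF : AEMeasurable F (volume.restrict (chan f₁ f₂ a b))) :
    ∫⁻ x in chan f₁ f₂ a b, F x
      = ∫⁻ x₁ in Ioo a b, ∫⁻ x₂ in Ioo (f₁ x₁) (f₂ x₁), F (x₁, x₂) := by
  have hmeas : MeasurableSet (chan f₁ f₂ a b) := chan_measurableSet hf₁ hf₂ a b
  rw [← lintegral_indicator hmeas]
  have hind : AEMeasurable ((chan f₁ f₂ a b).indicator F) volume :=
    (aemeasurable_indicator_iff hmeas).mpr hF
  rw [MeasureTheory.Measure.volume_eq_prod]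
  rw [MeasureTheory.lintegral_prod _ (by rw [← MeasureTheory.Measure.volume_eq_prod]; exact hind)]
  have inner : ∀ x₁ : ℝ, (∫⁻ x₂, (chan f₁ f₂ a b).indicator F (x₁, x₂))
      = (Ioo a b).indicator (fun x₁ => ∫⁻ x₂ in Ioo (f₁ x₁) (f₂ x₁), F (x₁, x₂)) x₁ := by
    intro x₁
    by_cases h : x₁ ∈ Ioo a b
    · rw [indicator_of_mem h, ← lintegral_indicator measurableSet_Ioo]
      congr 1
      funext x₂
      by_cases h2 : x₂ ∈ Ioo (f₁ x₁) (f₂ x₁)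
      · rw [indicator_of_mem h2, indicator_of_mem (mem_chan.mpr ⟨h.1, h.2, h2.1, h2.2⟩)]
      · rw [indicator_of_notMem h2, indicator_of_notMem
          (fun hc => h2 ⟨(mem_chan.mp hc).2.2.1, (mem_chan.mp hc).2.2.2⟩)]
    · rw [indicator_of_notMem h]
      have hz : ∀ x₂, (chan f₁ f₂ a b).indicator F (x₁, x₂) = 0 := fun x₂ =>
        indicator_of_notMem (fun hc => h ⟨(mem_chan.mp hc).1, (mem_chan.mp hc).2.1⟩) F
      simp [hz]
  simp_rw [inner]
  rw [lintegral_indicator measurableSet_Ioo]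

set_option maxHeartbeats 4000000

/-- the Poincaré inequality
`‖v‖_{L²(Ω_{a,b})} ≤ C ‖f‖_{L^∞(a,b)} (1 + ‖f₂'‖_{L^∞(a,b)}) ‖∇v‖_{L²(Ω_{a,b})}`
(stated in squared form, and with the `L^∞` norms expressed through arbitrary upper bounds
`Mf` of `f` and `B₂` of `|f₂'|` on `(a,b)`). -/
theorem stmt_1 :
    ∃ C : ℝ, 0 < C ∧
      ∀ (f₁ f₂ : ℝ → ℝ) (d β : ℝ),
        ContDiff ℝ (⊤ : ℕ∞) f₁ → ContDiff ℝ (⊤ : ℕ∞) f₂ →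
        0 < d → (∀ x₁ : ℝ, d ≤ f₂ x₁ - f₁ x₁) →
        (∀ x₁ : ℝ, |deriv f₁ x₁| ≤ β) → (∀ x₁ : ℝ, |deriv f₂ x₁| ≤ β) →
        ∀ a b : ℝ, a < b →
        ∀ Mf B₂ : ℝ,
          (∀ x₁ ∈ Ioo a b, f₂ x₁ - f₁ x₁ ≤ Mf) →
          (∀ x₁ ∈ Ioo a b, |deriv f₂ x₁| ≤ B₂) →
          ∀ v₁ v₂ : ℝ × ℝ → ℝ,
            ContDiffOn ℝ 1 v₁ (closure (chan f₁ f₂ a b)) →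
            ContDiffOn ℝ 1 v₂ (closure (chan f₁ f₂ a b)) →
            -- zero flux
            (∀ x₁ ∈ Ioo a b, (∫ x₂ in (f₁ x₁)..(f₂ x₁), v₁ (x₁, x₂)) = 0) →
            -- `v·n = 0` on `∂Ω_{a,b} ∩ ∂Ω`
            (∀ x₁ ∈ Ioo a b, v₂ (x₁, f₁ x₁) = deriv f₁ x₁ * v₁ (x₁, f₁ x₁)) →
            (∀ x₁ ∈ Ioo a b, v₂ (x₁, f₂ x₁) = deriv f₂ x₁ * v₁ (x₁, f₂ x₁)) →
            (∫ x in chan f₁ f₂ a b, (v₁ x ^ 2 + v₂ x ^ 2)) ≤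
              (C * Mf * (1 + B₂)) ^ 2 * ∫ x in chan f₁ f₂ a b, gsq v₁ v₂ x := by
  classical
  refine ⟨2, two_pos, ?_⟩
  intro f₁ f₂ d β hf₁ hf₂ hd hgap hβ₁ hβ₂ a b hab Mf B₂ hMf hB₂ v₁ v₂ hv₁ hv₂ hflux hbc₁ hbc₂
  have hf₁c : Continuous f₁ := hf₁.continuous
  have hf₂c : Continuous f₂ := hf₂.continuous
  set S := chan f₁ f₂ a b with hSdef
  have hSopen : IsOpen S := chan_isOpen hf₁c hf₂c a b
  have hSmeas : MeasurableSet S := hSopen.measurableSet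
  have hSbdd : Bornology.IsBounded S := chan_isBounded hf₁c hf₂c a b
  have hK : IsCompact (closure S) := hSbdd.isCompact_closure
  have hSvol : volume S < ⊤ := hSbdd.measure_lt_top
  have hmid : (a + b) / 2 ∈ Ioo a b := ⟨by linarith, by linarith⟩
  have hB₂nn : 0 ≤ B₂ := le_trans (abs_nonneg _) (hB₂ _ hmid)
  have hMfpos : 0 < Mf := lt_of_lt_of_le hd (le_trans (hgap _) (hMf _ hmid))
  obtain ⟨Mv₁, hMv₁⟩ := hK.exists_bound_of_continuousOn hv₁.continuousOn
  obtain ⟨Mv₂, hMv₂⟩ := hK.exists_bound_of_continuousOn hv₂.continuousOn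
  obtain ⟨Md₁, hMd₁⟩ := bound_fderiv hSopen hK hv₁
  obtain ⟨Md₂, hMd₂⟩ := bound_fderiv hSopen hK hv₂
  have hnorm10 : ‖((1:ℝ), (0:ℝ))‖ ≤ 1 := by
    rw [Prod.norm_def]; simp
  have hnorm01 : ‖((0:ℝ), (1:ℝ))‖ ≤ 1 := by
    rw [Prod.norm_def]; simp
  have hder : ∀ (v : ℝ × ℝ → ℝ) (Md : ℝ), (∀ x ∈ S, ‖fderiv ℝ v x‖ ≤ Md) →
      ∀ (z : ℝ × ℝ), ‖z‖ ≤ 1 → ∀ w ∈ S, |fderiv ℝ v w z| ≤ Md := by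
    intro v Md hMd z hz w hw
    calc |fderiv ℝ v w z| = ‖fderiv ℝ v w z‖ := (Real.norm_eq_abs _).symm
      _ ≤ ‖fderiv ℝ v w‖ * ‖z‖ := (fderiv ℝ v w).le_opNorm z
      _ ≤ Md * 1 := mul_le_mul (hMd w hw) hz (norm_nonneg _)
          (le_trans (norm_nonneg _) (hMd w hw))
      _ = Md := mul_one _
  have hd₁10 := hder v₁ Md₁ hMd₁ _ hnorm10
  have hd₁01 := hder v₁ Md₁ hMd₁ _ hnorm01
  have hd₂10 := hder v₂ Md₂ hMd₂ _ hnorm10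
  have hd₂01 := hder v₂ Md₂ hMd₂ _ hnorm01
  set Mg : ℝ := Md₁ ^ 2 + Md₁ ^ 2 + Md₂ ^ 2 + Md₂ ^ 2 with hMgdef
  have sqb : ∀ (t M : ℝ), |t| ≤ M → t ^ 2 ≤ M ^ 2 := by
    intro t M h
    rw [← sq_abs]
    exact pow_le_pow_left₀ (abs_nonneg _) h 2
  have hgsqb : ∀ w ∈ S, |gsq v₁ v₂ w| ≤ Mg := by
    intro w hw
    have e1 := sqb _ _ (hd₁10 w hw)
    have e2 := sqb _ _ (hd₁01 w hw)
    have e3 := sqb _ _ (hd₂10 w hw)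
    have e4 := sqb _ _ (hd₂01 w hw)
    have hnn : 0 ≤ gsq v₁ v₂ w := by unfold gsq; positivity
    rw [abs_of_nonneg hnn]
    unfold gsq
    rw [hMgdef]
    linarith
  have hgsm : Measurable (gsq v₁ v₂) := by
    unfold gsq
    exact ((((measurable_fderiv_apply_const ℝ v₁ (1,0)).pow_const 2).add
      ((measurable_fderiv_apply_const ℝ v₁ (0,1)).pow_const 2)).add
      ((measurable_fderiv_apply_const ℝ v₂ (1,0)).pow_const 2)).add
      ((measurable_fderiv_apply_const ℝ v₂ (0,1)).pow_const 2)
  have hvsqc : ContinuousOn (fun x => v₁ x ^ 2 + v₂ x ^ 2) (closure S) :=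
    (hv₁.continuousOn.pow 2).add (hv₂.continuousOn.pow 2)
  have hvsqb : ∀ w ∈ closure S, |v₁ w ^ 2 + v₂ w ^ 2| ≤ Mv₁ ^ 2 + Mv₂ ^ 2 := by
    intro w hw
    have h1 := sqb _ _ (by simpa [Real.norm_eq_abs] using hMv₁ w hw)
    have h2 := sqb _ _ (by simpa [Real.norm_eq_abs] using hMv₂ w hw)
    rw [abs_of_nonneg (by positivity)]
    linarith
  have hIv : IntegrableOn (fun x => v₁ x ^ 2 + v₂ x ^ 2) S :=
    integrableOn_bdd hSmeas hSvol
      ((hvsqc.mono subset_closure).aestronglyMeasurable hSmeas)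
      (fun x hx => hvsqb x (subset_closure hx))
  have hIg : IntegrableOn (gsq v₁ v₂) S :=
    integrableOn_bdd hSmeas hSvol hgsm.aestronglyMeasurable.restrict hgsqb
  set K : ℝ := (2 * Mf * (1 + B₂)) ^ 2 with hKdef
  have hKnn : 0 ≤ K := sq_nonneg _
  -- measurability for Fubini
  have hFv : AEMeasurable (fun x : ℝ × ℝ => ENNReal.ofReal (v₁ x ^ 2 + v₂ x ^ 2))
      (volume.restrict S) :=
    ((hvsqc.mono subset_closure).aemeasurable hSmeas).ennreal_ofReal
  have hFg : AEMeasurable (fun x : ℝ × ℝ => ENNReal.ofReal (gsq v₁ v₂ x))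
      (volume.restrict S) := hgsm.aemeasurable.ennreal_ofReal.restrict
  have hlv := lint_chan hf₁c hf₂c a b _ hFv
  have hlg := lint_chan hf₁c hf₂c a b _ hFg
  have key : (∫⁻ x in S, ENNReal.ofReal (v₁ x ^ 2 + v₂ x ^ 2)) ≤
      ENNReal.ofReal K * ∫⁻ x in S, ENNReal.ofReal (gsq v₁ v₂ x) := by
    rw [hSdef] at *
    rw [hlv, hlg, ← MeasureTheory.lintegral_const_mul' _ _ ENNReal.ofReal_ne_top]
    refine MeasureTheory.setLIntegral_mono' measurableSet_Ioo ?_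
    intro x₁ hx₁
    have hlu : f₁ x₁ < f₂ x₁ := by have := hgap x₁; linarith
    have hmemS : ∀ y ∈ Ioo (f₁ x₁) (f₂ x₁), ((x₁ : ℝ), y) ∈ chan f₁ f₂ a b :=
      fun y hy => mem_chan.mpr ⟨hx₁.1, hx₁.2, hy.1, hy.2⟩
    have hclos : ∀ y ∈ Icc (f₁ x₁) (f₂ x₁), ((x₁ : ℝ), y) ∈ closure (chan f₁ f₂ a b) :=
      fun y hy => mem_closure_chan hx₁.1 hx₁.2 hlu hy
    have hcurvec : Continuous fun y : ℝ => ((x₁ : ℝ), y) := by fun_prop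
    have hg₁c : ContinuousOn (fun y => v₁ (x₁, y)) (Icc (f₁ x₁) (f₂ x₁)) :=
      hv₁.continuousOn.comp hcurvec.continuousOn hclos
    have hg₂c : ContinuousOn (fun y => v₂ (x₁, y)) (Icc (f₁ x₁) (f₂ x₁)) :=
      hv₂.continuousOn.comp hcurvec.continuousOn hclos
    have hdv : ∀ (v : ℝ×ℝ → ℝ), ContDiffOn ℝ 1 v (closure (chan f₁ f₂ a b)) →
        ∀ y ∈ Ioo (f₁ x₁) (f₂ x₁),
        HasDerivAt (fun y => v (x₁, y)) (fderiv ℝ v (x₁, y) (0, 1)) y := by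
      intro v hv y hy
      have hnh : closure (chan f₁ f₂ a b) ∈ nhds ((x₁:ℝ), y) :=
        Filter.mem_of_superset (hSopen.mem_nhds (hmemS y hy)) subset_closure
      have hdiff : DifferentiableAt ℝ v (x₁, y) := (hv.contDiffAt hnh).differentiableAt one_ne_zero
      exact hdiff.hasFDerivAt.comp_hasDerivAt y ((hasDerivAt_const y (x₁:ℝ)).prodMk (hasDerivAt_id y))
    have hd₁ := hdv v₁ hv₁
    have hd₂ := hdv v₂ hv₂
    have mkII : ∀ (ψ : ℝ → ℝ) (M : ℝ), Measurable ψ → (∀ y ∈ Ioo (f₁ x₁) (f₂ x₁), |ψ y| ≤ M) →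
        IntegrableOn ψ (Ioo (f₁ x₁) (f₂ x₁)) volume := by
      intro ψ M hm hb
      exact integrableOn_bdd measurableSet_Ioo measure_Ioo_lt_top
        hm.aestronglyMeasurable.restrict hb
    have mkIIint : ∀ (ψ : ℝ → ℝ), IntegrableOn ψ (Ioo (f₁ x₁) (f₂ x₁)) volume →
        IntervalIntegrable ψ volume (f₁ x₁) (f₂ x₁) := by
      intro ψ h
      rw [intervalIntegrable_iff_integrableOn_Ioc_of_le hlu.le,
        integrableOn_Ioc_iff_integrableOn_Ioo]
      exact h
    have hφ₁m : Measurable (fun y => fderiv ℝ v₁ (x₁, y) (0, 1)) :=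
      (measurable_fderiv_apply_const ℝ v₁ (0,1)).comp measurable_prodMk_left
    have hφ₂m : Measurable (fun y => fderiv ℝ v₂ (x₁, y) (0, 1)) :=
      (measurable_fderiv_apply_const ℝ v₂ (0,1)).comp measurable_prodMk_left
    have hφ₁b : ∀ y ∈ Ioo (f₁ x₁) (f₂ x₁), |fderiv ℝ v₁ (x₁, y) (0,1)| ≤ Md₁ :=
      fun y hy => hd₁01 _ (hmemS y hy)
    have hφ₂b : ∀ y ∈ Ioo (f₁ x₁) (f₂ x₁), |fderiv ℝ v₂ (x₁, y) (0,1)| ≤ Md₂ :=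
      fun y hy => hd₂01 _ (hmemS y hy)
    have hqm : Measurable (fun y => gsq v₁ v₂ (x₁, y)) := hgsm.comp measurable_prodMk_left
    have hqb : ∀ y ∈ Ioo (f₁ x₁) (f₂ x₁), |gsq v₁ v₂ (x₁, y)| ≤ Mg :=
      fun y hy => hgsqb _ (hmemS y hy)
    have hφ₁sqb : ∀ y ∈ Ioo (f₁ x₁) (f₂ x₁), |(fderiv ℝ v₁ (x₁,y) (0,1))^2| ≤ Md₁^2 := by
      intro y hy
      rw [abs_of_nonneg (sq_nonneg _)]
      exact sqb _ _ (hφ₁b y hy)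
    have hφ₂sqb : ∀ y ∈ Ioo (f₁ x₁) (f₂ x₁), |(fderiv ℝ v₂ (x₁,y) (0,1))^2| ≤ Md₂^2 := by
      intro y hy
      rw [abs_of_nonneg (sq_nonneg _)]
      exact sqb _ _ (hφ₂b y hy)
    have hbcx : |v₂ (x₁, f₂ x₁)| ≤ B₂ * |v₁ (x₁, f₂ x₁)| := by
      rw [hbc₂ x₁ hx₁, abs_mul]
      exact mul_le_mul_of_nonneg_right (hB₂ x₁ hx₁) (abs_nonneg _)
    have hfluxx := hflux x₁ hx₁
    have hslice := slice_ineq (g₁ := fun y => v₁ (x₁, y)) (g₂ := fun y => v₂ (x₁, y))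
      (φ₁ := fun y => fderiv ℝ v₁ (x₁,y) (0,1)) (φ₂ := fun y => fderiv ℝ v₂ (x₁,y) (0,1))
      hlu hB₂nn hg₁c hg₂c hd₁ hd₂
      (mkIIint _ (mkII _ Md₁ hφ₁m hφ₁b)) (mkIIint _ (mkII _ Md₂ hφ₂m hφ₂b))
      (mkIIint _ (mkII _ (Md₁^2) (hφ₁m.pow_const 2) hφ₁sqb))
      (mkIIint _ (mkII _ (Md₂^2) (hφ₂m.pow_const 2) hφ₂sqb))
      hfluxx hbcx
    have hφleq : ∀ y : ℝ, (fderiv ℝ v₁ (x₁,y) (0,1))^2 + (fderiv ℝ v₂ (x₁,y) (0,1))^2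
        ≤ gsq v₁ v₂ (x₁,y) := by
      intro y
      have hq : gsq v₁ v₂ (x₁,y) = (fderiv ℝ v₁ (x₁,y) (1,0))^2 + (fderiv ℝ v₁ (x₁,y) (0,1))^2 +
          (fderiv ℝ v₂ (x₁,y) (1,0))^2 + (fderiv ℝ v₂ (x₁,y) (0,1))^2 := rfl
      rw [hq]
      nlinarith [sq_nonneg (fderiv ℝ v₁ (x₁,y) (1,0)), sq_nonneg (fderiv ℝ v₂ (x₁,y) (1,0))]
    have h2 : (∫ y in (f₁ x₁)..(f₂ x₁),
          ((fderiv ℝ v₁ (x₁,y) (0,1))^2 + (fderiv ℝ v₂ (x₁,y) (0,1))^2))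
        ≤ ∫ y in (f₁ x₁)..(f₂ x₁), gsq v₁ v₂ (x₁,y) :=
      intervalIntegral.integral_mono_on hlu.le
        ((mkIIint _ (mkII _ (Md₁^2) (hφ₁m.pow_const 2) hφ₁sqb)).add
          (mkIIint _ (mkII _ (Md₂^2) (hφ₂m.pow_const 2) hφ₂sqb)))
        (mkIIint _ (mkII _ Mg hqm hqb)) (fun y _ => hφleq y)
    have hqnn : 0 ≤ ∫ y in (f₁ x₁)..(f₂ x₁), gsq v₁ v₂ (x₁,y) :=
      intervalIntegral.integral_nonneg hlu.le (fun y _ => by unfold gsq; positivity)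
    have hsq2 : (f₂ x₁ - f₁ x₁)^2 ≤ Mf^2 := pow_le_pow_left₀ (by linarith) (hMf x₁ hx₁) 2
    have hconst : 2*(f₂ x₁ - f₁ x₁)^2*(1+B₂)^2 ≤ K := by
      rw [hKdef]
      nlinarith [mul_le_mul_of_nonneg_right hsq2 (sq_nonneg (1+B₂)), sq_nonneg (Mf*(1+B₂))]
    have hreal : (∫ y in (f₁ x₁)..(f₂ x₁), (v₁ (x₁,y)^2 + v₂ (x₁,y)^2))
        ≤ K * ∫ y in (f₁ x₁)..(f₂ x₁), gsq v₁ v₂ (x₁,y) := by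
      calc (∫ y in (f₁ x₁)..(f₂ x₁), (v₁ (x₁,y)^2 + v₂ (x₁,y)^2))
          ≤ 2*(f₂ x₁ - f₁ x₁)^2*(1+B₂)^2 * ∫ y in (f₁ x₁)..(f₂ x₁),
            ((fderiv ℝ v₁ (x₁,y) (0,1))^2 + (fderiv ℝ v₂ (x₁,y) (0,1))^2) := hslice
        _ ≤ 2*(f₂ x₁ - f₁ x₁)^2*(1+B₂)^2 * ∫ y in (f₁ x₁)..(f₂ x₁), gsq v₁ v₂ (x₁,y) :=
            mul_le_mul_of_nonneg_left h2 (by positivity)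
        _ ≤ K * ∫ y in (f₁ x₁)..(f₂ x₁), gsq v₁ v₂ (x₁,y) :=
            mul_le_mul_of_nonneg_right hconst hqnn
    have hIvs : IntegrableOn (fun y => v₁ (x₁,y)^2 + v₂ (x₁,y)^2) (Ioo (f₁ x₁) (f₂ x₁)) := by
      refine integrableOn_bdd (M := Mv₁^2 + Mv₂^2) measurableSet_Ioo measure_Ioo_lt_top ?_ ?_
      · exact ((hvsqc.comp hcurvec.continuousOn
          (fun y hy => hclos y (Ioo_subset_Icc_self hy))).aestronglyMeasurable measurableSet_Ioo)
      · exact fun y hy => hvsqb _ (hclos y (Ioo_subset_Icc_self hy))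
    have hIqs : IntegrableOn (fun y => gsq v₁ v₂ (x₁,y)) (Ioo (f₁ x₁) (f₂ x₁)) :=
      mkII _ Mg hqm hqb
    have e1 : (∫ y in (f₁ x₁)..(f₂ x₁), (v₁ (x₁,y)^2+v₂ (x₁,y)^2))
        = ∫ y in Ioo (f₁ x₁) (f₂ x₁), (v₁ (x₁,y)^2+v₂ (x₁,y)^2) := by
      rw [intervalIntegral.integral_of_le hlu.le, integral_Ioc_eq_integral_Ioo]
    have e2 : (∫ y in (f₁ x₁)..(f₂ x₁), gsq v₁ v₂ (x₁,y))
        = ∫ y in Ioo (f₁ x₁) (f₂ x₁), gsq v₁ v₂ (x₁,y) := by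
      rw [intervalIntegral.integral_of_le hlu.le, integral_Ioc_eq_integral_Ioo]
    show (∫⁻ x₂ in Ioo (f₁ x₁) (f₂ x₁), ENNReal.ofReal (v₁ (x₁, x₂)^2 + v₂ (x₁, x₂)^2))
        ≤ ENNReal.ofReal K * ∫⁻ x₂ in Ioo (f₁ x₁) (f₂ x₁), ENNReal.ofReal (gsq v₁ v₂ (x₁, x₂))
    rw [← ofReal_integral_eq_lintegral_ofReal hIvs
        (Filter.Eventually.of_forall (fun y => by positivity)),
      ← ofReal_integral_eq_lintegral_ofReal hIqs
        (Filter.Eventually.of_forall (fun y => by unfold gsq; positivity)),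
      ← ENNReal.ofReal_mul hKnn]
    refine ENNReal.ofReal_le_ofReal ?_
    rw [← e1, ← e2]
    exact hreal

  -- conclude
  have lv := ofReal_integral_eq_lintegral_ofReal hIv
    (Filter.Eventually.of_forall (fun x => by positivity))
  have lg := ofReal_integral_eq_lintegral_ofReal hIg
    (Filter.Eventually.of_forall (fun x => by unfold gsq; positivity))
  have final : ENNReal.ofReal (∫ x in S, (v₁ x ^ 2 + v₂ x ^ 2)) ≤
      ENNReal.ofReal (K * ∫ x in S, gsq v₁ v₂ x) := by
    rw [lv, ENNReal.ofReal_mul hKnn, lg]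
    exact key
  have hrhsnn : 0 ≤ K * ∫ x in S, gsq v₁ v₂ x :=
    mul_nonneg hKnn (setIntegral_nonneg hSmeas (fun x _ => by unfold gsq; positivity))
  exact (ENNReal.ofReal_le_ofReal_iff hrhsnn).mp final
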